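/- For integers k, j ≥ 0: if μ > −1 then w ∂/∂z̄ Q^μ_{k,j}(z,w) + (k+μ+1) Q^μ_{k,j}(z,w) = ((k+μ+1)(j+μ+1)/(μ+1)) Q^{μ+1}_{k,j}(z,w); and if μ > 0 then (1−zw) w ∂/∂z̄ Q^μ_{k,j}(z,w) − [j(1−zw) + μ] Q^μ_{k,j}(z,w) = −μ Q^{μ−1}_{k,j}(z,w). These are identities of bivariate polynomials in (z,w). -/

import Mathlib

noncomputable def jacobiP (α β : ℝ) (n : ℕ) : Polynomial ℝ :=
  (n.factorial : ℝ)⁻¹ •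
    ∑ k ∈ Finset.range (n + 1),
      ((n.choose k : ℝ) * ((ascPochhammer ℝ (n - k)).eval ((k : ℝ) + α + 1)) *
          ((ascPochhammer ℝ k).eval ((n : ℝ) + α + β + 1))) •
        ((Polynomial.X - 1) * Polynomial.C (2⁻¹ : ℝ)) ^ k

noncomputable def zernikeQ (μ : ℝ) (k j : ℕ) : MvPolynomial (Fin 2) ℂ :=
  if j ≤ k then
    MvPolynomial.C ((((j.factorial : ℝ) / ((ascPochhammer ℝ j).eval (μ + 1)) : ℝ) : ℂ)) *
      MvPolynomial.X 0 ^ (k - j) *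
      Polynomial.aeval (2 * MvPolynomial.X 0 * MvPolynomial.X 1 - 1)
        (jacobiP μ ((k - j : ℕ) : ℝ) j)
  else
    MvPolynomial.C ((((k.factorial : ℝ) / ((ascPochhammer ℝ k).eval (μ + 1)) : ℝ) : ℂ)) *
      MvPolynomial.X 1 ^ (j - k) *
      Polynomial.aeval (2 * MvPolynomial.X 0 * MvPolynomial.X 1 - 1)
        (jacobiP μ ((j - k : ℕ) : ℝ) k)

section Aux
open Polynomial Finset

noncomputable def dC (α β : ℝ) (n k : ℕ) : ℝ :=
  (n.choose k : ℝ) * ((ascPochhammer ℝ (n - k)).eval ((k : ℝ) + α + 1)) *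
    ((ascPochhammer ℝ k).eval ((n : ℝ) + α + β + 1))

lemma dC_top (α β : ℝ) (n : ℕ) : dC α β n (n+1) = 0 := by
  simp [dC, Nat.choose_succ_self]

lemma eval_jacobiP (α β : ℝ) (n : ℕ) (t : ℝ) :
    (jacobiP α β n).eval t
      = (n.factorial : ℝ)⁻¹ * ∑ k ∈ range (n+1), dC α β n k * ((t-1)/2)^k := by
  simp only [jacobiP, dC, eval_smul, eval_finset_sum, smul_eq_mul, eval_mul, eval_pow,
    eval_sub, eval_X, eval_one, eval_C, div_eq_mul_inv]

lemma eval_deriv_jacobiP (α β : ℝ) (n : ℕ) (t : ℝ) :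
    (Polynomial.derivative (jacobiP α β n)).eval t
      = (n.factorial : ℝ)⁻¹ *
          ∑ k ∈ range (n+1), dC α β n k * ((k : ℝ) * ((t-1)/2)^(k-1) * (1/2)) := by
  simp only [jacobiP, dC, derivative_smul, derivative_sum, derivative_smul, derivative_pow,
    derivative_mul, derivative_sub, derivative_X, derivative_one, derivative_C, sub_zero,
    mul_zero, zero_add, mul_one, eval_smul, eval_finset_sum, smul_eq_mul, eval_mul, eval_pow,
    eval_sub, eval_X, eval_one, eval_C, eval_natCast, one_mul, add_zero]
  congr 1
  refine Finset.sum_congr rfl fun k hk => ?_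
  ring

lemma poch_succ_left_eval (n : ℕ) (x : ℝ) :
    (ascPochhammer ℝ (n+1)).eval x = x * (ascPochhammer ℝ n).eval (x+1) := by
  rw [ascPochhammer_succ_left]; simp [eval_comp]

lemma key1 (α β : ℝ) (n k : ℕ) (hk : k ≤ n) :
    ((k:ℝ) + ((n:ℝ)+α+β+1)) * dC α β n k + ((k:ℝ)+1) * dC α β n (k+1)
      = ((n:ℝ)+α+β+1) * dC (α+1) β n k := by
  rcases eq_or_lt_of_le hk with rfl | hlt
  · rw [dC_top]
    unfold dC
    rw [Nat.sub_self]
    have h1 := ascPochhammer_succ_eval (S := ℝ) k ((k:ℝ)+α+β+1)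
    have h2 := poch_succ_left_eval k ((k:ℝ)+α+β+1)
    have e3 : (k:ℝ)+(α+1)+β+1 = ((k:ℝ)+α+β+1)+1 := by ring
    rw [e3]
    simp only [ascPochhammer_zero, eval_one, Nat.choose_self, Nat.cast_one]
    linear_combination h2 - h1
  · obtain ⟨m, rfl⟩ : ∃ m, n = k + m + 1 := ⟨n - k - 1, by omega⟩
    unfold dC
    have e1 : k + m + 1 - k = m + 1 := by omega
    have e2 : k + m + 1 - (k+1) = m := by omega
    rw [e1, e2]
    have hch : ((k+m+1).choose (k+1) : ℝ) * ((k:ℝ)+1) = ((k+m+1).choose k : ℝ) * ((m:ℝ)+1) := by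
      have := Nat.choose_succ_right_eq (k+m+1) k
      have e : k + m + 1 - k = m + 1 := by omega
      rw [e] at this
      exact_mod_cast congrArg (Nat.cast : ℕ → ℝ) this
    have hA := poch_succ_left_eval m ((k:ℝ)+α+1)
    have hB := ascPochhammer_succ_eval (S := ℝ) k ((k:ℝ)+(m:ℝ)+1+α+β+1)
    have hC := ascPochhammer_succ_eval (S := ℝ) m ((k:ℝ)+α+1+1)
    have hD := poch_succ_left_eval k ((k:ℝ)+(m:ℝ)+1+α+β+1)
    rw [hB] at hD
    push_cast
    have g1 : (k:ℝ)+1+α+1 = (k:ℝ)+α+1+1 := by ring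
    have g2 : (k:ℝ)+(m:ℝ)+1+(α+1)+β+1 = (k:ℝ)+(m:ℝ)+1+α+β+1+1 := by ring
    have g3 : (k:ℝ)+(α+1)+1 = (k:ℝ)+α+1+1 := by ring
    rw [g1, g2, g3, hA, hC, hB]
    linear_combination
      (((ascPochhammer ℝ m).eval ((k:ℝ)+α+1+1) * (ascPochhammer ℝ k).eval ((k:ℝ)+(m:ℝ)+1+α+β+1)
          * ((k:ℝ)+(m:ℝ)+1+α+β+1 + (k:ℝ)))) * hch
        + (((k+m+1).choose k : ℝ) * (ascPochhammer ℝ m).eval ((k:ℝ)+α+1+1)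
          * ((k:ℝ)+α+1+1+(m:ℝ))) * hD

lemma key2a (α β : ℝ) (n : ℕ) :
    α * dC α β n 0 = (α + (n:ℝ)) * dC (α-1) β n 0 := by
  unfold dC
  simp only [Nat.choose_zero_right, Nat.cast_one, Nat.sub_zero, Nat.cast_zero,
    ascPochhammer_zero, eval_one, one_mul, mul_one]
  have g1 : (0:ℝ) + α + 1 = α + 1 := by ring
  have g2 : (0:ℝ) + (α-1) + 1 = α := by ring
  rw [g1, g2]
  have h1 := poch_succ_left_eval n α
  have h2 := ascPochhammer_succ_eval (S := ℝ) n α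
  linear_combination h2 - h1

lemma key2b (α β : ℝ) (n k : ℕ) (hk : k < n) :
    ((k:ℝ)+1+α) * dC α β n (k+1) - (α+(n:ℝ)) * dC (α-1) β n (k+1)
      = ((n:ℝ)-(k:ℝ)) * dC α β n k := by
  obtain ⟨m, rfl⟩ : ∃ m, n = k + m + 1 := ⟨n - k - 1, by omega⟩
  unfold dC
  have e1 : k + m + 1 - k = m + 1 := by omega
  have e2 : k + m + 1 - (k+1) = m := by omega
  rw [e1, e2]
  have hch : ((k+m+1).choose (k+1) : ℝ) * ((k:ℝ)+1) = ((k+m+1).choose k : ℝ) * ((m:ℝ)+1) := by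
    have := Nat.choose_succ_right_eq (k+m+1) k
    rw [e1] at this
    exact_mod_cast congrArg (Nat.cast : ℕ → ℝ) this
  have hA := poch_succ_left_eval m ((k:ℝ)+α+1)
  have hF := ascPochhammer_succ_eval (S := ℝ) m ((k:ℝ)+α+1)
  have hQ : ((k:ℝ)+α+1) * (ascPochhammer ℝ m).eval ((k:ℝ)+α+1+1)
      = (ascPochhammer ℝ m).eval ((k:ℝ)+α+1) * ((k:ℝ)+α+1+(m:ℝ)) := by
    rw [← hA, hF]
  have hB := ascPochhammer_succ_eval (S := ℝ) k ((k:ℝ)+(m:ℝ)+1+α+β+1)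
  have hE := poch_succ_left_eval k ((k:ℝ)+(m:ℝ)+1+α+β)
  push_cast
  have g1 : (k:ℝ)+1+α+1 = (k:ℝ)+α+1+1 := by ring
  have g4 : (k:ℝ)+1+(α-1)+1 = (k:ℝ)+α+1 := by ring
  have g5 : (k:ℝ)+(m:ℝ)+1+(α-1)+β+1 = (k:ℝ)+(m:ℝ)+1+α+β := by ring
  rw [g1, g4, g5, hA, hB, hE]
  linear_combination
    (((k:ℝ)+α+1) * (ascPochhammer ℝ m).eval ((k:ℝ)+α+1+1)
        * (ascPochhammer ℝ k).eval ((k:ℝ)+(m:ℝ)+1+α+β+1)) * hch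
      + (((k+m+1).choose (k+1) : ℝ) * (ascPochhammer ℝ k).eval ((k:ℝ)+(m:ℝ)+1+α+β+1)
        * ((k:ℝ)+(m:ℝ)+1+α+β)) * hQ

lemma yk_aux (y : ℝ) (k : ℕ) : (k:ℝ) * (y * y^(k-1)) = (k:ℝ) * y^k := by
  cases k with
  | zero => simp
  | succ m => rw [Nat.add_sub_cancel, ← pow_succ']

lemma U1 (α β : ℝ) (n : ℕ) :
    (X + 1) * Polynomial.derivative (jacobiP α β n) + C ((n:ℝ)+α+β+1) * jacobiP α β n
      = C ((n:ℝ)+α+β+1) * jacobiP (α+1) β n := by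
  apply Polynomial.funext; intro t
  obtain ⟨y, rfl⟩ : ∃ y, t = 2*y+1 := ⟨(t-1)/2, by ring⟩
  simp only [eval_add, eval_mul, eval_C, eval_X, eval_one, eval_jacobiP, eval_deriv_jacobiP,
    show (2*y+1-1)/2 = y from by ring]
  set c := (n:ℝ)+α+β+1 with hc
  have hS1 : (2*(y+1)) * (∑ k ∈ range (n+1), dC α β n k * ((k:ℝ) * y^(k-1) * (1/2)))
      = (∑ k ∈ range (n+1), ((k:ℝ) * dC α β n k) * y^k)
        + (∑ k ∈ range (n+1), ((k:ℝ) * dC α β n k) * y^(k-1)) := by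
    rw [Finset.mul_sum, ← Finset.sum_add_distrib]
    refine Finset.sum_congr rfl fun k hk => ?_
    linear_combination (dC α β n k) * yk_aux y k
  have hshift : (∑ k ∈ range (n+1), ((k:ℝ) * dC α β n k) * y^(k-1))
      = ∑ k ∈ range (n+1), (((k:ℝ)+1) * dC α β n (k+1)) * y^k := by
    rw [Finset.sum_range_succ' _ n, Finset.sum_range_succ]
    simp only [Nat.cast_zero, zero_mul, Nat.cast_succ, Nat.add_sub_cancel, dC_top,
      mul_zero, zero_mul, add_zero, Nat.cast_add, Nat.cast_one]
  have hkey : (∑ k ∈ range (n+1), ((k:ℝ) * dC α β n k) * y^k)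
        + (∑ k ∈ range (n+1), (((k:ℝ)+1) * dC α β n (k+1)) * y^k)
        + c * (∑ k ∈ range (n+1), dC α β n k * y^k)
      = c * (∑ k ∈ range (n+1), dC (α+1) β n k * y^k) := by
    rw [Finset.mul_sum, Finset.mul_sum, ← Finset.sum_add_distrib, ← Finset.sum_add_distrib]
    refine Finset.sum_congr rfl fun k hk => ?_
    have hk' : k ≤ n := by
      have := Finset.mem_range.mp hk; omega
    linear_combination y^k * key1 α β n k hk'
  linear_combination ((n.factorial:ℝ))⁻¹ * (hS1 + hshift + hkey)

lemma U2 (α β : ℝ) (n : ℕ) :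
    (C (2⁻¹:ℝ) * (1 - X)) * ((X + 1) * Polynomial.derivative (jacobiP α β n))
        - (C ((n:ℝ)) * (C (2⁻¹:ℝ) * (1 - X)) + C α) * jacobiP α β n
      = -(C (α + (n:ℝ)) * jacobiP (α-1) β n) := by
  apply Polynomial.funext; intro t
  obtain ⟨y, rfl⟩ : ∃ y, t = 2*y+1 := ⟨(t-1)/2, by ring⟩
  simp only [eval_sub, eval_add, eval_mul, eval_C, eval_X, eval_one, eval_neg,
    eval_jacobiP, eval_deriv_jacobiP, show (2*y+1-1)/2 = y from by ring]
  have hS1 : (-y) * (2*(y+1)) * (∑ k ∈ range (n+1), dC α β n k * ((k:ℝ) * y^(k-1) * (1/2)))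
      = -(∑ k ∈ range (n+1), ((k:ℝ) * dC α β n k) * y^(k+1))
        - (∑ k ∈ range (n+1), ((k:ℝ) * dC α β n k) * y^k) := by
    rw [Finset.mul_sum, ← Finset.sum_neg_distrib, ← Finset.sum_sub_distrib]
    refine Finset.sum_congr rfl fun k hk => ?_
    linear_combination (-(y+1) * dC α β n k) * yk_aux y k
  have hmain : (n:ℝ) * (y * (∑ k ∈ range (n+1), dC α β n k * y^k))
        - (∑ k ∈ range (n+1), ((k:ℝ) * dC α β n k) * y^(k+1))
      = ((∑ k ∈ range (n+1), ((k:ℝ) * dC α β n k) * y^k)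
          + α * (∑ k ∈ range (n+1), dC α β n k * y^k))
        - (α+(n:ℝ)) * (∑ k ∈ range (n+1), dC (α-1) β n k * y^k) := by
    have L : (n:ℝ) * (y * (∑ k ∈ range (n+1), dC α β n k * y^k))
          - (∑ k ∈ range (n+1), ((k:ℝ) * dC α β n k) * y^(k+1))
        = ∑ k ∈ range (n+1), (((n:ℝ)-(k:ℝ)) * dC α β n k) * y^(k+1) := by
      rw [Finset.mul_sum, Finset.mul_sum, ← Finset.sum_sub_distrib]
      refine Finset.sum_congr rfl fun k hk => ?_
      ring
    have R : ((∑ k ∈ range (n+1), ((k:ℝ) * dC α β n k) * y^k)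
          + α * (∑ k ∈ range (n+1), dC α β n k * y^k))
          - (α+(n:ℝ)) * (∑ k ∈ range (n+1), dC (α-1) β n k * y^k)
        = ∑ k ∈ range (n+1),
            (((k:ℝ)+α) * dC α β n k - (α+(n:ℝ)) * dC (α-1) β n k) * y^k := by
      rw [Finset.mul_sum, Finset.mul_sum, ← Finset.sum_add_distrib, ← Finset.sum_sub_distrib]
      refine Finset.sum_congr rfl fun k hk => ?_
      ring
    rw [L, R, Finset.sum_range_succ, Finset.sum_range_succ' _ n]
    have h0 : (((0:ℕ):ℝ)+α) * dC α β n 0 - (α+(n:ℝ)) * dC (α-1) β n 0 = 0 := by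
      have := key2a α β n
      push_cast
      linear_combination this
    rw [h0]
    simp only [sub_self, zero_mul, add_zero, pow_zero, mul_one, zero_add]
    refine Finset.sum_congr rfl fun i hi => ?_
    have hi' : i < n := Finset.mem_range.mp hi
    push_cast
    linear_combination (-(y^(i+1))) * key2b α β n i hi'
  linear_combination ((n.factorial:ℝ))⁻¹ * (hS1 + hmain)

lemma algMap_eq (a : ℝ) :
    algebraMap ℝ (MvPolynomial (Fin 2) ℂ) a = MvPolynomial.C (a : ℂ) := by
  rw [IsScalarTower.algebraMap_apply ℝ ℂ (MvPolynomial (Fin 2) ℂ)]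
  rfl

lemma pderiv_aeval_poly (i : Fin 2) (q : MvPolynomial (Fin 2) ℂ) (p : Polynomial ℝ) :
    MvPolynomial.pderiv i (Polynomial.aeval q p)
      = Polynomial.aeval q (Polynomial.derivative p) * MvPolynomial.pderiv i q := by
  induction p using Polynomial.induction_on with
  | C a => simp [algMap_eq]
  | add p r hp hr => simp [hp, hr, add_mul]
  | monomial n a h =>
      simp only [map_mul, Polynomial.aeval_C, Polynomial.aeval_X_pow, Polynomial.derivative_mul,
        Polynomial.derivative_C, Polynomial.derivative_X_pow, zero_mul, zero_add, map_natCast,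
        MvPolynomial.pderiv_mul, Derivation.leibniz_pow, algMap_eq,
        MvPolynomial.pderiv_C, mul_zero, zero_add, smul_eq_mul, nsmul_eq_mul]
      push_cast
      ring

lemma pderiv_u :
    MvPolynomial.pderiv (1 : Fin 2)
        (2 * MvPolynomial.X 0 * MvPolynomial.X 1 - 1 : MvPolynomial (Fin 2) ℂ)
      = 2 * MvPolynomial.X 0 := by
  have h01 : (1 : Fin 2) ≠ 0 := by decide
  rw [show (2 : MvPolynomial (Fin 2) ℂ) = MvPolynomial.C 2 from
    (map_ofNat (MvPolynomial.C : ℂ →+* MvPolynomial (Fin 2) ℂ) 2).symm]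
  simp [MvPolynomial.pderiv_mul, MvPolynomial.pderiv_X_of_ne h01, MvPolynomial.pderiv_X_self]

lemma hw1 (c : ℂ) (e : ℕ) (P : Polynomial ℝ) :
    MvPolynomial.X 1 * MvPolynomial.pderiv (1 : Fin 2)
        (MvPolynomial.C c * MvPolynomial.X 0 ^ e *
          Polynomial.aeval (2 * MvPolynomial.X 0 * MvPolynomial.X 1 - 1) P)
      = MvPolynomial.C c * MvPolynomial.X 0 ^ e *
          Polynomial.aeval (2 * MvPolynomial.X 0 * MvPolynomial.X 1 - 1)
            ((Polynomial.X + 1) * Polynomial.derivative P) := by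
  have h01 : (1 : Fin 2) ≠ 0 := by decide
  rw [MvPolynomial.pderiv_mul, pderiv_aeval_poly, pderiv_u]
  have h0 : MvPolynomial.pderiv (1 : Fin 2)
      (MvPolynomial.C c * MvPolynomial.X 0 ^ e : MvPolynomial (Fin 2) ℂ) = 0 := by
    simp [MvPolynomial.pderiv_mul, Derivation.leibniz_pow, MvPolynomial.pderiv_X_of_ne h01]
  rw [h0, map_mul, Polynomial.aeval_add, Polynomial.aeval_X, Polynomial.aeval_one]
  ring

lemma hw2 (c : ℂ) (e : ℕ) (he : 1 ≤ e) (P : Polynomial ℝ) :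
    MvPolynomial.X 1 * MvPolynomial.pderiv (1 : Fin 2)
        (MvPolynomial.C c * MvPolynomial.X 1 ^ e *
          Polynomial.aeval (2 * MvPolynomial.X 0 * MvPolynomial.X 1 - 1) P)
      = MvPolynomial.C c * MvPolynomial.X 1 ^ e *
          (Polynomial.aeval (2 * MvPolynomial.X 0 * MvPolynomial.X 1 - 1)
              ((Polynomial.X + 1) * Polynomial.derivative P)
            + (e : MvPolynomial (Fin 2) ℂ) *
                Polynomial.aeval (2 * MvPolynomial.X 0 * MvPolynomial.X 1 - 1) P) := by
  obtain ⟨d, rfl⟩ : ∃ d, e = d + 1 := ⟨e - 1, by omega⟩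
  rw [MvPolynomial.pderiv_mul, pderiv_aeval_poly, pderiv_u]
  have h0 : MvPolynomial.pderiv (1 : Fin 2)
      (MvPolynomial.C c * MvPolynomial.X 1 ^ (d+1) : MvPolynomial (Fin 2) ℂ)
      = (((d+1 : ℕ)) : MvPolynomial (Fin 2) ℂ) * (MvPolynomial.C c * MvPolynomial.X 1 ^ d) := by
    rw [MvPolynomial.pderiv_mul, Derivation.leibniz_pow, MvPolynomial.pderiv_X_self,
      MvPolynomial.pderiv_C]
    simp only [Nat.add_sub_cancel, mul_one, zero_mul, zero_add, smul_eq_mul, nsmul_eq_mul]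
    ring
  rw [h0, map_mul, Polynomial.aeval_add, Polynomial.aeval_X, Polynomial.aeval_one]
  push_cast
  ring

lemma const1 (μ : ℝ) (hμ : μ > -1) (k j : ℕ) :
    ((j.factorial:ℝ) / (ascPochhammer ℝ j).eval (μ+1)) * ((k:ℝ)+μ+1)
      = (((k:ℝ)+μ+1) * ((j:ℝ)+μ+1) / (μ+1))
          * ((j.factorial:ℝ) / (ascPochhammer ℝ j).eval (μ+1+1)) := by
  have hA : (0:ℝ) < (ascPochhammer ℝ j).eval (μ+1) := ascPochhammer_pos _ _ (by linarith)
  have hB : (0:ℝ) < (ascPochhammer ℝ j).eval (μ+1+1) := ascPochhammer_pos _ _ (by linarith)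
  have e1 := ascPochhammer_succ_eval (S := ℝ) j (μ+1)
  have e2 := poch_succ_left_eval j (μ+1)
  have hkey : (ascPochhammer ℝ j).eval (μ+1) * (μ+1+(j:ℝ))
      = (μ+1) * (ascPochhammer ℝ j).eval (μ+1+1) := by linear_combination e2 - e1
  have h1 : (μ+1) ≠ 0 := by linarith
  field_simp
  linear_combination (-((k:ℝ)+μ+1)) * hkey

lemma const2 (μ : ℝ) (hμ : μ > 0) (j : ℕ) :
    ((j.factorial:ℝ) / (ascPochhammer ℝ j).eval (μ+1)) * (μ+(j:ℝ))
      = μ * ((j.factorial:ℝ) / (ascPochhammer ℝ j).eval (μ-1+1)) := by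
  have hm : μ - 1 + 1 = μ := by ring
  rw [hm]
  have hA : (0:ℝ) < (ascPochhammer ℝ j).eval (μ+1) := ascPochhammer_pos _ _ (by linarith)
  have hB : (0:ℝ) < (ascPochhammer ℝ j).eval μ := ascPochhammer_pos _ _ (by linarith)
  have e1 := ascPochhammer_succ_eval (S := ℝ) j μ
  have e2 := poch_succ_left_eval j μ
  have hkey : (ascPochhammer ℝ j).eval μ * (μ+(j:ℝ))
      = μ * (ascPochhammer ℝ j).eval (μ+1) := by linear_combination e2 - e1
  field_simp
  linear_combination hkey

end Aux

open MvPolynomial in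
theorem zernike_ladder_Z4 (μ : ℝ) (k j : ℕ) :
    (μ > -1 →
      X 1 * pderiv (1 : Fin 2) (zernikeQ μ k j) +
          C ((((k : ℝ) + μ + 1 : ℝ)) : ℂ) * zernikeQ μ k j =
        C (((((k : ℝ) + μ + 1) * ((j : ℝ) + μ + 1) / (μ + 1) : ℝ)) : ℂ) *
          zernikeQ (μ + 1) k j) ∧
    (μ > 0 →
      (1 - X 0 * X 1) * (X 1 * pderiv (1 : Fin 2) (zernikeQ μ k j)) -
          (C (((j : ℝ)) : ℂ) * (1 - X 0 * X 1) + C ((μ : ℂ))) * zernikeQ μ k j =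
        -(C ((μ : ℂ)) * zernikeQ (μ - 1) k j)) := by
  constructor
  · intro hμ
    rw [zernikeQ, zernikeQ]
    by_cases hjk : j ≤ k
    · rw [if_pos hjk, if_pos hjk, hw1]
      have hU := U1 μ (((k - j : ℕ)):ℝ) j
      have hβ : (j:ℝ) + μ + ((k-j:ℕ):ℝ) + 1 = (k:ℝ)+μ+1 := by
        rw [Nat.cast_sub hjk]; ring
      rw [hβ] at hU
      have key := congrArg
        (Polynomial.aeval (2 * MvPolynomial.X 0 * MvPolynomial.X 1 - 1 : MvPolynomial (Fin 2) ℂ)) hU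
      simp only [Polynomial.aeval_add, Polynomial.aeval_mul, Polynomial.aeval_C,
        Polynomial.aeval_X, Polynomial.aeval_one, algMap_eq] at key ⊢
      have hcc : (MvPolynomial.C (((j.factorial:ℝ) / (ascPochhammer ℝ j).eval (μ+1) : ℝ) : ℂ)
            * MvPolynomial.C ((((k:ℝ)+μ+1) : ℝ) : ℂ) : MvPolynomial (Fin 2) ℂ)
          = MvPolynomial.C (((((k:ℝ)+μ+1) * ((j:ℝ)+μ+1) / (μ+1)) : ℝ) : ℂ)
            * MvPolynomial.C (((j.factorial:ℝ) / (ascPochhammer ℝ j).eval (μ+1+1) : ℝ) : ℂ) := by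
        rw [← map_mul, ← map_mul]
        congr 1
        exact_mod_cast congrArg (fun r : ℝ => (r : ℂ)) (const1 μ hμ k j)
      linear_combination
        (MvPolynomial.C (((j.factorial:ℝ) / (ascPochhammer ℝ j).eval (μ+1) : ℝ) : ℂ)
          * MvPolynomial.X 0 ^ (k-j)) * key
        + (MvPolynomial.X 0 ^ (k-j) *
            Polynomial.aeval (2 * MvPolynomial.X 0 * MvPolynomial.X 1 - 1 : MvPolynomial (Fin 2) ℂ)
              (jacobiP (μ+1) (((k - j : ℕ)):ℝ) j)) * hcc
    · have hkj : k ≤ j := by omega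
      rw [if_neg hjk, if_neg hjk, hw2 _ _ (by omega : 1 ≤ j - k)]
      have hU := U1 μ (((j - k : ℕ)):ℝ) k
      have hβ : (k:ℝ) + μ + ((j-k:ℕ):ℝ) + 1 = (j:ℝ)+μ+1 := by
        rw [Nat.cast_sub hkj]; ring
      rw [hβ] at hU
      have key := congrArg
        (Polynomial.aeval (2 * MvPolynomial.X 0 * MvPolynomial.X 1 - 1 : MvPolynomial (Fin 2) ℂ)) hU
      simp only [Polynomial.aeval_add, Polynomial.aeval_mul, Polynomial.aeval_C,
        Polynomial.aeval_X, Polynomial.aeval_one, algMap_eq] at key ⊢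
      have hE : (((j-k:ℕ) : ℕ) : MvPolynomial (Fin 2) ℂ)
            + MvPolynomial.C ((((k:ℝ)+μ+1) : ℝ) : ℂ)
          = MvPolynomial.C ((((j:ℝ)+μ+1) : ℝ) : ℂ) := by
        rw [(map_natCast (MvPolynomial.C : ℂ →+* MvPolynomial (Fin 2) ℂ) (j-k)).symm,
          ← map_add]
        congr 1
        push_cast [Nat.cast_sub hkj]
        ring
      have hr : ((k.factorial:ℝ) / (ascPochhammer ℝ k).eval (μ+1)) * ((j:ℝ)+μ+1)
          = (((k:ℝ)+μ+1) * ((j:ℝ)+μ+1) / (μ+1))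
              * ((k.factorial:ℝ) / (ascPochhammer ℝ k).eval (μ+1+1)) := by
        linear_combination const1 μ hμ j k
      have hcc : (MvPolynomial.C (((k.factorial:ℝ) / (ascPochhammer ℝ k).eval (μ+1) : ℝ) : ℂ)
            * MvPolynomial.C ((((j:ℝ)+μ+1) : ℝ) : ℂ) : MvPolynomial (Fin 2) ℂ)
          = MvPolynomial.C (((((k:ℝ)+μ+1) * ((j:ℝ)+μ+1) / (μ+1)) : ℝ) : ℂ)
            * MvPolynomial.C (((k.factorial:ℝ) / (ascPochhammer ℝ k).eval (μ+1+1) : ℝ) : ℂ) := by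
        rw [← map_mul, ← map_mul]
        congr 1
        exact_mod_cast congrArg (fun r : ℝ => (r : ℂ)) hr
      linear_combination
        (MvPolynomial.C (((k.factorial:ℝ) / (ascPochhammer ℝ k).eval (μ+1) : ℝ) : ℂ)
          * MvPolynomial.X 1 ^ (j-k)) * key
        + (MvPolynomial.C (((k.factorial:ℝ) / (ascPochhammer ℝ k).eval (μ+1) : ℝ) : ℂ)
            * MvPolynomial.X 1 ^ (j-k) *
            Polynomial.aeval (2 * MvPolynomial.X 0 * MvPolynomial.X 1 - 1 : MvPolynomial (Fin 2) ℂ)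
              (jacobiP μ (((j - k : ℕ)):ℝ) k)) * hE
        + (MvPolynomial.X 1 ^ (j-k) *
            Polynomial.aeval (2 * MvPolynomial.X 0 * MvPolynomial.X 1 - 1 : MvPolynomial (Fin 2) ℂ)
              (jacobiP (μ+1) (((j - k : ℕ)):ℝ) k)) * hcc
  · intro hμ
    rw [zernikeQ, zernikeQ]
    have hH : (2 : MvPolynomial (Fin 2) ℂ) * MvPolynomial.C (((2⁻¹:ℝ)) : ℂ) = 1 := by
      rw [show ((2⁻¹:ℝ) : ℂ) = (2⁻¹ : ℂ) by norm_num,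
        show (2 : MvPolynomial (Fin 2) ℂ) = MvPolynomial.C 2 from
          (map_ofNat (MvPolynomial.C : ℂ →+* MvPolynomial (Fin 2) ℂ) 2).symm, ← map_mul]
      norm_num
    by_cases hjk : j ≤ k
    · rw [if_pos hjk, if_pos hjk, hw1]
      have hU := U2 μ (((k - j : ℕ)):ℝ) j
      have key := congrArg
        (Polynomial.aeval (2 * MvPolynomial.X 0 * MvPolynomial.X 1 - 1 : MvPolynomial (Fin 2) ℂ)) hU
      simp only [Polynomial.aeval_add, Polynomial.aeval_mul, Polynomial.aeval_C,
        Polynomial.aeval_X, Polynomial.aeval_one, map_sub, map_neg, map_one,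
        algMap_eq] at key ⊢
      have hcc : (MvPolynomial.C (((j.factorial:ℝ) / (ascPochhammer ℝ j).eval (μ+1) : ℝ) : ℂ)
            * MvPolynomial.C (((μ + (j:ℝ)) : ℝ) : ℂ) : MvPolynomial (Fin 2) ℂ)
          = MvPolynomial.C ((μ : ℝ) : ℂ)
            * MvPolynomial.C (((j.factorial:ℝ) / (ascPochhammer ℝ j).eval (μ-1+1) : ℝ) : ℂ) := by
        rw [← map_mul, ← map_mul]
        congr 1
        exact_mod_cast congrArg (fun r : ℝ => (r : ℂ)) (const2 μ hμ j)
      linear_combination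
        (MvPolynomial.C (((j.factorial:ℝ) / (ascPochhammer ℝ j).eval (μ+1) : ℝ) : ℂ)
          * MvPolynomial.X 0 ^ (k-j)) * key
        + (-(MvPolynomial.C (((j.factorial:ℝ) / (ascPochhammer ℝ j).eval (μ+1) : ℝ) : ℂ)
            * MvPolynomial.X 0 ^ (k-j) *
            ((2 * MvPolynomial.X 0 * MvPolynomial.X 1 - 1 + 1) *
                Polynomial.aeval (2 * MvPolynomial.X 0 * MvPolynomial.X 1 - 1 : MvPolynomial (Fin 2) ℂ)
                  (Polynomial.derivative (jacobiP μ (((k - j : ℕ)):ℝ) j))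
              - MvPolynomial.C (((j:ℝ)) : ℂ) *
                Polynomial.aeval (2 * MvPolynomial.X 0 * MvPolynomial.X 1 - 1 : MvPolynomial (Fin 2) ℂ)
                  (jacobiP μ (((k - j : ℕ)):ℝ) j)) *
            (1 - MvPolynomial.X 0 * MvPolynomial.X 1))) * hH
        + (-(MvPolynomial.X 0 ^ (k-j) *
            Polynomial.aeval (2 * MvPolynomial.X 0 * MvPolynomial.X 1 - 1 : MvPolynomial (Fin 2) ℂ)
              (jacobiP (μ-1) (((k - j : ℕ)):ℝ) j))) * hcc
    · have hkj : k ≤ j := by omega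
      rw [if_neg hjk, if_neg hjk, hw2 _ _ (by omega : 1 ≤ j - k)]
      have hU := U2 μ (((j - k : ℕ)):ℝ) k
      have key := congrArg
        (Polynomial.aeval (2 * MvPolynomial.X 0 * MvPolynomial.X 1 - 1 : MvPolynomial (Fin 2) ℂ)) hU
      simp only [Polynomial.aeval_add, Polynomial.aeval_mul, Polynomial.aeval_C,
        Polynomial.aeval_X, Polynomial.aeval_one, map_sub, map_neg, map_one,
        algMap_eq] at key ⊢
      have hE2 : (((j-k:ℕ) : ℕ) : MvPolynomial (Fin 2) ℂ)
            + MvPolynomial.C ((((k:ℝ)) : ℝ) : ℂ)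
          = MvPolynomial.C ((((j:ℝ)) : ℝ) : ℂ) := by
        rw [(map_natCast (MvPolynomial.C : ℂ →+* MvPolynomial (Fin 2) ℂ) (j-k)).symm,
          ← map_add]
        congr 1
        push_cast [Nat.cast_sub hkj]
        ring
      have hcc : (MvPolynomial.C (((k.factorial:ℝ) / (ascPochhammer ℝ k).eval (μ+1) : ℝ) : ℂ)
            * MvPolynomial.C (((μ + (k:ℝ)) : ℝ) : ℂ) : MvPolynomial (Fin 2) ℂ)
          = MvPolynomial.C ((μ : ℝ) : ℂ)
            * MvPolynomial.C (((k.factorial:ℝ) / (ascPochhammer ℝ k).eval (μ-1+1) : ℝ) : ℂ) := by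
        rw [← map_mul, ← map_mul]
        congr 1
        exact_mod_cast congrArg (fun r : ℝ => (r : ℂ)) (const2 μ hμ k)
      linear_combination
        (MvPolynomial.C (((k.factorial:ℝ) / (ascPochhammer ℝ k).eval (μ+1) : ℝ) : ℂ)
          * MvPolynomial.X 1 ^ (j-k)) * key
        + (-(MvPolynomial.C (((k.factorial:ℝ) / (ascPochhammer ℝ k).eval (μ+1) : ℝ) : ℂ)
            * MvPolynomial.X 1 ^ (j-k) *
            ((2 * MvPolynomial.X 0 * MvPolynomial.X 1 - 1 + 1) *
                Polynomial.aeval (2 * MvPolynomial.X 0 * MvPolynomial.X 1 - 1 : MvPolynomial (Fin 2) ℂ)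
                  (Polynomial.derivative (jacobiP μ (((j - k : ℕ)):ℝ) k))
              - MvPolynomial.C (((k:ℝ)) : ℂ) *
                Polynomial.aeval (2 * MvPolynomial.X 0 * MvPolynomial.X 1 - 1 : MvPolynomial (Fin 2) ℂ)
                  (jacobiP μ (((j - k : ℕ)):ℝ) k)) *
            (1 - MvPolynomial.X 0 * MvPolynomial.X 1)) ) * hH
        + ((MvPolynomial.C (((k.factorial:ℝ) / (ascPochhammer ℝ k).eval (μ+1) : ℝ) : ℂ)
            * MvPolynomial.X 1 ^ (j-k) * (1 - MvPolynomial.X 0 * MvPolynomial.X 1) *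
            Polynomial.aeval (2 * MvPolynomial.X 0 * MvPolynomial.X 1 - 1 : MvPolynomial (Fin 2) ℂ)
              (jacobiP μ (((j - k : ℕ)):ℝ) k))) * hE2
        + (-(MvPolynomial.X 1 ^ (j-k) *
            Polynomial.aeval (2 * MvPolynomial.X 0 * MvPolynomial.X 1 - 1 : MvPolynomial (Fin 2) ℂ)
              (jacobiP (μ-1) (((j - k : ℕ)):ℝ) k))) * hcc
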